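/- Let (X,d) be a metric space, let α < 1 with α ≥ 0, and let F be a multivalued mapping from X to X such that for each x ∈ X there exists y ∈ F(x) satisfying d(y,x) = d(F(x),x) and d(F(y),y) ≤ α d(F(x),x). Then there exists a Cauchy sequence (x_n) in X such that x_{n+1} ∈ F(x_n) for every n. -/

import Mathlib

open Metric Filter

/-- **Lemma 1.2.** Let `(X,d)` be a metric space and `F` a multivalued mapping from `X`
to `X` (nonempty values) such that for some `0 ≤ α < 1`, for each `x ∈ X` there exists
`y ∈ F x` with `d(y,x) = d(F(x),x)` and `d(F(y),y) ≤ α·d(F(x),x)`.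
Then there exists a Cauchy sequence `(xₙ)` in `X` with `xₙ₊₁ ∈ F xₙ` for all `n`. -/
theorem cauchy_seq_of_nearest_point_contraction
    {X : Type*} [MetricSpace X] [Nonempty X]
    (F : X → Set X) (hFne : ∀ x, (F x).Nonempty)
    (α : ℝ) (hα : 0 ≤ α) (hα1 : α < 1)
    (hF : ∀ x : X, ∃ y ∈ F x,
      dist y x = infDist x (F x) ∧
      infDist y (F y) ≤ α * infDist x (F x)) :
    ∃ u : ℕ → X, CauchySeq u ∧ ∀ n : ℕ, u (n + 1) ∈ F (u n) := by
  set f : X → X := fun x => (hF x).choose with hf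
  have hfm : ∀ x, f x ∈ F x := fun x => (hF x).choose_spec.1
  have hfd : ∀ x, dist (f x) x = infDist x (F x) :=
    fun x => (hF x).choose_spec.2.1
  have hfc : ∀ x, infDist (f x) (F (f x)) ≤ α * infDist x (F x) :=
    fun x => (hF x).choose_spec.2.2
  set u : ℕ → X := fun n => f^[n] (Classical.arbitrary X) with hu
  have hstep : ∀ n, u (n + 1) = f (u n) := by
    intro n
    simp [hu, Function.iterate_succ_apply']
  refine ⟨u, ?_, fun n => by rw [hstep]; exact hfm _⟩
  set C := infDist (u 0) (F (u 0)) with hC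
  have key : ∀ n, infDist (u n) (F (u n)) ≤ C * α ^ n := by
    intro n
    induction n with
    | zero => simp [hC]
    | succ n ih =>
      rw [hstep]
      calc infDist (f (u n)) (F (f (u n))) ≤ α * infDist (u n) (F (u n)) := hfc _
        _ ≤ α * (C * α ^ n) := by
            exact mul_le_mul_of_nonneg_left ih hα
        _ = C * α ^ (n + 1) := by ring
  apply cauchySeq_of_le_geometric α C hα1
  intro n
  rw [dist_comm, hstep, hfd]
  exact key n
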